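/- Let a and b be countable past-finite partial orders each of whose levels is finite, and for k ∈ ℕ let a_(k) (respectively b_(k)) denote the sub-poset of elements of level at most k. If for every k the finite posets a_(k) and b_(k) are order-isomorphic, then a and b are order-isomorphic. (Compactness step in the proof of Θ ⊆ Γ.) -/

import Mathlib

/-- A poset (given by its order relation `le`) is *past-finite* if the past
`{y | y ≤ x}` of every element `x` is finite. -/
def PastFinite {α : Type} (le : α → α → Prop) : Prop := ∀ x : α, {y : α | le y x}.Finite

/-- The finite poset `s` on `Fin n` *is a stem in* the poset `(α, le)`: there is an
order-embedding of `s` into `(α, le)` whose image is a down-closed (lower) set. -/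
def IsStemIn {α : Type} {n : ℕ} (s : Fin n → Fin n → Prop) (le : α → α → Prop) : Prop :=
  ∃ f : Fin n → α, Function.Injective f ∧ (∀ i j, s i j ↔ le (f i) (f j)) ∧
    ∀ (x : α) (j : Fin n), le x (f j) → ∃ i, f i = x

/-- Two posets *have the same stems* if every finite poset is a stem in one iff it is a
stem in the other (every finite poset is isomorphic to one on some `Fin n`). -/
def SameStems {α β : Type} (le₁ : α → α → Prop) (le₂ : β → β → Prop) : Prop :=
  ∀ (n : ℕ) (s : Fin n → Fin n → Prop), IsStemIn s le₁ ↔ IsStemIn s le₂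

/-- The posets `(α, le₁)` and `(β, le₂)` are order-isomorphic. -/
def OrderIsoRel {α β : Type} (le₁ : α → α → Prop) (le₂ : β → β → Prop) : Prop :=
  ∃ e : α ≃ β, ∀ x y : α, le₁ x y ↔ le₂ (e x) (e y)

/-- Strict order relation associated to `le` (in a partial order). -/
def LtRel {α : Type} (le : α → α → Prop) (x y : α) : Prop := le x y ∧ x ≠ y

/-- `x` is maximal: no element lies strictly above it. -/
def IsMaximalRel {α : Type} (le : α → α → Prop) (x : α) : Prop := ∀ y, le x y → y = x

/-- There is a chain `x₀ < x₁ < ⋯ < x_k = x` (of length `k`) with top element `x`. -/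
def ChainTo {α : Type} (le : α → α → Prop) (x : α) (k : ℕ) : Prop :=
  ∃ f : Fin (k + 1) → α, (∀ i j : Fin (k + 1), i < j → LtRel le (f i) (f j)) ∧ f (Fin.last k) = x

/-- `x` has level `k`: `k` is the maximum length of a chain with top element `x`. -/
def HasLevel {α : Type} (le : α → α → Prop) (x : α) (k : ℕ) : Prop :=
  ChainTo le x k ∧ ∀ m, ChainTo le x m → m ≤ k

/-- A causet (countable past-finite partial order) is *rogue* if there exists a causet
not order-isomorphic to it having the same stems. -/
def IsRogueRel {α : Type} (le : α → α → Prop) : Prop :=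
  ∃ (β : Type) (le' : β → β → Prop), IsPartialOrder β le' ∧ Countable β ∧ PastFinite le' ∧
    ¬ OrderIsoRel le le' ∧ SameStems le le'

section AuxC
variable {α : Type} {le : α → α → Prop}

lemma chainTo_zero (hpo : IsPartialOrder α le) (x : α) : ChainTo le x 0 := by
  refine ⟨fun _ => x, ?_, rfl⟩
  intro i j hij
  have hi := i.isLt; have hj := j.isLt
  rw [Fin.lt_def] at hij; omega

lemma chainTo_succ (hpo : IsPartialOrder α le) {x y : α} {m : ℕ}
    (h : ChainTo le x m) (hxy : LtRel le x y) : ChainTo le y (m + 1) := by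
  obtain ⟨f, hf, hlast⟩ := h
  refine ⟨fun i => if h : i.val < m + 1 then f ⟨i.val, h⟩ else y, ?_, ?_⟩
  · intro i j hij
    rw [Fin.lt_def] at hij
    have hj := j.isLt
    by_cases hjm : j.val < m + 1
    · have him : i.val < m + 1 := by omega
      simp only [dif_pos hjm, dif_pos him]
      exact hf _ _ (by rw [Fin.lt_def]; exact hij)
    · have hjv : j.val = m + 1 := by omega
      have him : i.val < m + 1 := by omega
      simp only [dif_pos him, dif_neg hjm]
      -- need LtRel le (f ⟨i.val, him⟩) y
      by_cases hil : i.val = m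
      · have : (⟨i.val, him⟩ : Fin (m+1)) = Fin.last m := by ext; simp [hil]
        rw [this, hlast]; exact hxy
      · have hlt : (⟨i.val, him⟩ : Fin (m+1)) < Fin.last m := by
          rw [Fin.lt_def]; simp; omega
        have h1 := hf _ _ hlt
        rw [hlast] at h1
        refine ⟨hpo.trans _ _ _ h1.1 hxy.1, ?_⟩
        intro he
        exact hxy.2 (hpo.antisymm _ _ hxy.1 (he ▸ h1.1))
  · have : ¬ ((Fin.last (m+1)).val < m + 1) := by simp
    simp [this]

lemma le_of_chain (hpo : IsPartialOrder α le) {x : α} {m : ℕ}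
    {f : Fin (m+1) → α} (hf : ∀ i j : Fin (m + 1), i < j → LtRel le (f i) (f j))
    (hlast : f (Fin.last m) = x) (i : Fin (m+1)) : le (f i) x := by
  by_cases hi : i = Fin.last m
  · rw [hi, hlast]; exact hpo.refl x
  · have : i < Fin.last m := lt_of_le_of_ne (Fin.le_last i) hi
    exact hlast ▸ (hf _ _ this).1

lemma chain_bound (hpo : IsPartialOrder α le) (hpf : PastFinite le) (x : α) {m : ℕ}
    (h : ChainTo le x m) : m ≤ (hpf x).toFinset.card := by
  obtain ⟨f, hf, hlast⟩ := h
  have hinj : Function.Injective f := by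
    intro i j hij
    rcases lt_trichotomy i j with h1 | h1 | h1
    · exact absurd hij (hf _ _ h1).2
    · exact h1
    · exact absurd hij.symm (hf _ _ h1).2
  have : Fintype.card (Fin (m+1)) ≤ (hpf x).toFinset.card := by
    have := Fintype.card_le_of_injective (fun i => (⟨f i, by
        simp only [Set.Finite.mem_toFinset]; exact le_of_chain hpo hf hlast i⟩ :
        (hpf x).toFinset)) (fun i j hij => hinj (congrArg Subtype.val hij))
    simpa [Fintype.card_coe] using this
  rw [Fintype.card_fin] at this; omega

lemma bound_of_le (hpo : IsPartialOrder α le) {x y : α} (hxy : le x y) {k : ℕ}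
    (hk : ∀ m, ChainTo le y m → m ≤ k) : ∀ m, ChainTo le x m → m ≤ k := by
  intro m hm
  by_cases hne : x = y
  · exact hk m (hne ▸ hm)
  · have := hk (m+1) (chainTo_succ hpo hm ⟨hxy, hne⟩)
    omega

lemma finite_bounded (hpo : IsPartialOrder α le)
    (hfin : ∀ k : ℕ, {x : α | HasLevel le x k}.Finite) (k : ℕ) :
    {x : α | ∀ m, ChainTo le x m → m ≤ k}.Finite := by
  classical
  refine Set.Finite.subset (Set.Finite.biUnion (Set.finite_Iic k) (fun j _ => hfin j)) ?_
  intro x hx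
  have h0 : ChainTo le x 0 := chainTo_zero hpo x
  refine Set.mem_biUnion (Nat.findGreatest_le k : Nat.findGreatest (ChainTo le x) k ≤ k) ?_
  constructor
  · exact Nat.findGreatest_spec (Nat.zero_le k) h0
  · intro m hm
    exact Nat.le_findGreatest (hx m hm) hm

end AuxC

section Transfer
variable {α β : Type} {leA : α → α → Prop} {leB : β → β → Prop}

/-- elements of level at most `k` -/
abbrev SubLev (le : α → α → Prop) (k : ℕ) : Type := {z : α // ∀ m, ChainTo le z m → m ≤ k}

lemma level_transfer (hpoA : IsPartialOrder α leA) (hpoB : IsPartialOrder β leB) {K : ℕ}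
    (e : SubLev leA K ≃ SubLev leB K)
    (he : ∀ x y : SubLev leA K, leA x.1 y.1 ↔ leB (e x).1 (e y).1)
    (x : SubLev leA K) {j : ℕ} (hx : ∀ m, ChainTo leA x.1 m → m ≤ j) :
    ∀ m, ChainTo leB (e x).1 m → m ≤ j := by
  rintro m ⟨g, hg, hlast⟩
  have hmem : ∀ i, ∀ m', ChainTo leB (g i) m' → m' ≤ K := by
    intro i
    exact bound_of_le hpoB (hlast ▸ le_of_chain hpoB hg hlast i) (e x).2
  set gs : Fin (m + 1) → SubLev leB K := fun i => ⟨g i, hmem i⟩ with hgs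
  set f : Fin (m + 1) → α := fun i => (e.symm (gs i)).1 with hfdef
  have hlast' : f (Fin.last m) = x.1 := by
    have : gs (Fin.last m) = e x := Subtype.ext (by simp [hgs, hlast])
    simp [hfdef, this]
  refine hx m ⟨f, ?_, hlast'⟩
  intro i j hij
  have hle : leB (gs i).1 (gs j).1 := (hg i j hij).1
  constructor
  · have := (he (e.symm (gs i)) (e.symm (gs j))).mpr
    simp only [Equiv.apply_symm_apply] at this
    exact this hle
  · intro hfe
    have : gs i = gs j := by
      have h1 : e.symm (gs i) = e.symm (gs j) := Subtype.ext hfe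
      simpa using congrArg e h1
    exact (hg i j hij).2 (congrArg Subtype.val this)

/-- Set of level-respecting order isomorphisms between two levels. -/
def IsoSet (leA : α → α → Prop) (leB : β → β → Prop) (k : ℕ) : Type :=
  {e : SubLev leA k ≃ SubLev leB k // ∀ x y, leA x.1 y.1 ↔ leB (e x).1 (e y).1}

def inclLev {k m : ℕ} (hkm : k ≤ m) (x : SubLev leA k) : SubLev leA m :=
  ⟨x.1, fun n h => le_trans (x.2 n h) hkm⟩

lemma isoSet_symm_prop {m : ℕ} (E : IsoSet leA leB m) :
    ∀ x y : SubLev leB m, leB x.1 y.1 ↔ leA (E.1.symm x).1 (E.1.symm y).1 := by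
  intro x y
  have := (E.2 (E.1.symm x) (E.1.symm y)).symm
  simpa using this

def restrToFun (hpoA : IsPartialOrder α leA) (hpoB : IsPartialOrder β leB) {k m : ℕ}
    (hkm : k ≤ m) (E : IsoSet leA leB m) (x : SubLev leA k) : SubLev leB k :=
  ⟨(E.1 (inclLev hkm x)).1, level_transfer hpoA hpoB E.1 E.2 _ x.2⟩

def restrInvFun (hpoA : IsPartialOrder α leA) (hpoB : IsPartialOrder β leB) {k m : ℕ}
    (hkm : k ≤ m) (E : IsoSet leA leB m) (y : SubLev leB k) : SubLev leA k :=
  ⟨(E.1.symm (inclLev hkm y)).1, level_transfer hpoB hpoA E.1.symm (isoSet_symm_prop E) _ y.2⟩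

def restr (hpoA : IsPartialOrder α leA) (hpoB : IsPartialOrder β leB) {k m : ℕ} (hkm : k ≤ m)
    (E : IsoSet leA leB m) : IsoSet leA leB k :=
  ⟨{ toFun := restrToFun hpoA hpoB hkm E
     invFun := restrInvFun hpoA hpoB hkm E
     left_inv := fun x => Subtype.ext (by
       show (E.1.symm (inclLev hkm (restrToFun hpoA hpoB hkm E x))).1 = x.1
       have h1 : inclLev hkm (restrToFun hpoA hpoB hkm E x) = E.1 (inclLev hkm x) :=
         Subtype.ext rfl
       rw [h1, Equiv.symm_apply_apply]
       rfl)
     right_inv := fun y => Subtype.ext (by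
       show (E.1 (inclLev hkm (restrInvFun hpoA hpoB hkm E y))).1 = y.1
       have h1 : inclLev hkm (restrInvFun hpoA hpoB hkm E y) = E.1.symm (inclLev hkm y) :=
         Subtype.ext rfl
       rw [h1, Equiv.apply_symm_apply]
       rfl) },
   fun x y => E.2 (inclLev hkm x) (inclLev hkm y)⟩

lemma restr_val (hpoA : IsPartialOrder α leA) (hpoB : IsPartialOrder β leB) {k m : ℕ}
    (hkm : k ≤ m) (E : IsoSet leA leB m) (x : SubLev leA k) :
    ((restr hpoA hpoB hkm E).1 x).1 = (E.1 (inclLev hkm x)).1 := rfl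

lemma restr_symm_val (hpoA : IsPartialOrder α leA) (hpoB : IsPartialOrder β leB) {k m : ℕ}
    (hkm : k ≤ m) (E : IsoSet leA leB m) (y : SubLev leB k) :
    ((restr hpoA hpoB hkm E).1.symm y).1 = (E.1.symm (inclLev hkm y)).1 := rfl

lemma restr_restr (hpoA : IsPartialOrder α leA) (hpoB : IsPartialOrder β leB) {k m n : ℕ}
    (hkm : k ≤ m) (hmn : m ≤ n) (E : IsoSet leA leB n) :
    restr hpoA hpoB hkm (restr hpoA hpoB hmn E) = restr hpoA hpoB (hkm.trans hmn) E := by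
  refine Subtype.ext (Equiv.ext fun x => Subtype.ext ?_)
  simp only [restr_val]
  exact congrArg (fun z => (E.1 z).1) (Subtype.ext rfl)

lemma restr_id (hpoA : IsPartialOrder α leA) (hpoB : IsPartialOrder β leB) {k : ℕ}
    (E : IsoSet leA leB k) : restr hpoA hpoB (le_refl k) E = E := by
  refine Subtype.ext (Equiv.ext fun x => Subtype.ext ?_)
  simp only [restr_val]
  exact congrArg (fun z => (E.1 z).1) (Subtype.ext rfl)

end Transfer

section Main
open CategoryTheory
variable {α β : Type} {leA : α → α → Prop} {leB : β → β → Prop}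

def levF (hpoA : IsPartialOrder α leA) (hpoB : IsPartialOrder β leB) : ℕᵒᵖ ⥤ Type where
  obj k := IsoSet leA leB k.unop
  map {k m} h := TypeCat.ofHom (restr hpoA hpoB (leOfHom h.unop))
  map_id k := by ext E; exact restr_id hpoA hpoB E
  map_comp {k m n} f g := by
    ext E; exact (restr_restr hpoA hpoB (leOfHom g.unop) (leOfHom f.unop) E).symm

theorem levelwise_main (hpoA : IsPartialOrder α leA) (hpoB : IsPartialOrder β leB)
    (hpfA : PastFinite leA) (hpfB : PastFinite leB)
    (hfinA : ∀ k : ℕ, {x : α | HasLevel leA x k}.Finite)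
    (hfinB : ∀ k : ℕ, {x : β | HasLevel leB x k}.Finite)
    (hiso : ∀ k : ℕ,
      OrderIsoRel
        (fun x y : {z : α // ∀ m, ChainTo leA z m → m ≤ k} => leA x.1 y.1)
        (fun x y : {z : β // ∀ m, ChainTo leB z m → m ≤ k} => leB x.1 y.1)) :
    OrderIsoRel leA leB := by
  classical
  haveI hFA : ∀ k : ℕ, Finite (SubLev leA k) := fun k =>
    (finite_bounded hpoA hfinA k).to_subtype
  haveI hFB : ∀ k : ℕ, Finite (SubLev leB k) := fun k =>
    (finite_bounded hpoB hfinB k).to_subtype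
  haveI : ∀ k : ℕᵒᵖ, Finite ((levF hpoA hpoB).obj k) := by
    intro k
    haveI := hFA k.unop; haveI := hFB k.unop
    exact Subtype.finite
  haveI : ∀ k : ℕᵒᵖ, Nonempty ((levF hpoA hpoB).obj k) := by
    intro k
    obtain ⟨e, he⟩ := hiso k.unop
    exact ⟨⟨e, he⟩⟩
  obtain ⟨u, hu⟩ := nonempty_sections_of_finite_inverse_system (levF hpoA hpoB)
  set v : ∀ k : ℕ, IsoSet leA leB k := fun k => u (Opposite.op k) with hvdef
  have hv : ∀ {k m : ℕ} (hkm : k ≤ m), restr hpoA hpoB hkm (v m) = v k := by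
    intro k m hkm
    exact hu ((homOfLE hkm).op : Opposite.op m ⟶ Opposite.op k)
  -- bounds
  set bndA : α → ℕ := fun x => (hpfA x).toFinset.card with hbndAdef
  set bndB : β → ℕ := fun y => (hpfB y).toFinset.card with hbndBdef
  have hbA : ∀ (x : α) (m : ℕ), ChainTo leA x m → m ≤ bndA x := fun x m h =>
    chain_bound hpoA hpfA x h
  have hbB : ∀ (y : β) (m : ℕ), ChainTo leB y m → m ≤ bndB y := fun y m h =>
    chain_bound hpoB hpfB y h
  set E : α → β := fun x => ((v (bndA x)).1 ⟨x, hbA x⟩).1 with hEdef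
  set E' : β → α := fun y => ((v (bndB y)).1.symm ⟨y, hbB y⟩).1 with hE'def
  have cohE : ∀ (k : ℕ) (x : α) (h : ∀ m, ChainTo leA x m → m ≤ k),
      ((v k).1 ⟨x, h⟩).1 = E x := by
    intro k x h
    have step : ∀ (j m : ℕ) (hjm : j ≤ m) (hj : ∀ n, ChainTo leA x n → n ≤ j),
        ((v j).1 ⟨x, hj⟩).1 = ((v m).1 ⟨x, fun n hn => (hj n hn).trans hjm⟩).1 := by
      intro j m hjm hj
      rw [← hv hjm, restr_val]
      exact congrArg (fun z => ((v m).1 z).1) (Subtype.ext rfl)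
    have h1 := step k (max k (bndA x)) (le_max_left _ _) h
    have h2 := step (bndA x) (max k (bndA x)) (le_max_right _ _) (hbA x)
    rw [hEdef, h1]
    exact h2.symm
  have cohE' : ∀ (k : ℕ) (y : β) (h : ∀ m, ChainTo leB y m → m ≤ k),
      ((v k).1.symm ⟨y, h⟩).1 = E' y := by
    intro k y h
    have step : ∀ (j m : ℕ) (hjm : j ≤ m) (hj : ∀ n, ChainTo leB y n → n ≤ j),
        ((v j).1.symm ⟨y, hj⟩).1 = ((v m).1.symm ⟨y, fun n hn => (hj n hn).trans hjm⟩).1 := by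
      intro j m hjm hj
      rw [← hv hjm, restr_symm_val]
      exact congrArg (fun z => ((v m).1.symm z).1) (Subtype.ext rfl)
    have h1 := step k (max k (bndB y)) (le_max_left _ _) h
    have h2 := step (bndB y) (max k (bndB y)) (le_max_right _ _) (hbB y)
    rw [hE'def, h1]
    exact h2.symm
  refine ⟨⟨E, E', ?_, ?_⟩, ?_⟩
  · intro x
    have hEx : ∀ m, ChainTo leB (E x) m → m ≤ bndA x := ((v (bndA x)).1 ⟨x, hbA x⟩).2
    have h1 := cohE' (bndA x) (E x) hEx
    have h2 : (⟨E x, hEx⟩ : SubLev leB (bndA x)) = (v (bndA x)).1 ⟨x, hbA x⟩ :=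
      Subtype.ext rfl
    rw [h2, Equiv.symm_apply_apply] at h1
    exact h1.symm
  · intro y
    have hEy : ∀ m, ChainTo leA (E' y) m → m ≤ bndB y := ((v (bndB y)).1.symm ⟨y, hbB y⟩).2
    have h1 := cohE (bndB y) (E' y) hEy
    have h2 : (⟨E' y, hEy⟩ : SubLev leA (bndB y)) = (v (bndB y)).1.symm ⟨y, hbB y⟩ :=
      Subtype.ext rfl
    rw [h2, Equiv.apply_symm_apply] at h1
    exact h1.symm
  · intro x y
    set k := max (bndA x) (bndA y) with hk
    have hx : ∀ m, ChainTo leA x m → m ≤ k := fun m h => (hbA x m h).trans (le_max_left _ _)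
    have hy : ∀ m, ChainTo leA y m → m ≤ k := fun m h => (hbA y m h).trans (le_max_right _ _)
    have h := (v k).2 ⟨x, hx⟩ ⟨y, hy⟩
    rw [cohE k x hx, cohE k y hy] at h
    exact h

end Main

/-- **Compactness step**: if `a` and `b` are countable past-finite partial orders all of
whose levels are finite, and for each `k` the (finite) sub-posets of elements of level
at most `k` are order-isomorphic, then `a` and `b` are order-isomorphic. -/
theorem orderIso_of_levelwise_iso (α β : Type) (leA : α → α → Prop) (leB : β → β → Prop)
    (hpoA : IsPartialOrder α leA) (hpoB : IsPartialOrder β leB)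
    (hcA : Countable α) (hcB : Countable β)
    (hpfA : PastFinite leA) (hpfB : PastFinite leB)
    (hfinA : ∀ k : ℕ, {x : α | HasLevel leA x k}.Finite)
    (hfinB : ∀ k : ℕ, {x : β | HasLevel leB x k}.Finite)
    (hiso : ∀ k : ℕ,
      OrderIsoRel
        (fun x y : {z : α // ∀ m, ChainTo leA z m → m ≤ k} => leA x.1 y.1)
        (fun x y : {z : β // ∀ m, ChainTo leB z m → m ≤ k} => leB x.1 y.1)) :
    OrderIsoRel leA leB := by
  exact levelwise_main hpoA hpoB hpfA hpfB hfinA hfinB hiso
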